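/- Let V be a 4-dimensional real vector space with a nondegenerate symmetric bilinear form g, and let DR, DT : V → Sym²(V*) be linear maps (the values at a point of the covariant derivatives ∇_j R_{kl} and ∇_j T_{kl} of the Ricci and stress-energy tensors). Set dR(j) = tr_g(DR_j) and dT(j) = tr_g(DT_j). Define H(j,k,l) = DR_j(k,l) + DR_k(l,j) + DR_l(j,k) − (1/3)[g(k,l)dR(j) + g(l,j)dR(k) + g(j,k)dR(l)] and T(j,k,l) = DT_j(k,l) + DT_k(l,j) + DT_l(j,k) − (1/6)[g(k,l)dT(j) + g(l,j)dT(k) + g(j,k)dT(l)], and define DK_j = DR_j − (1/2)dR(j)·g − DT_j with dK(j) = tr_g(DK_j) = −dR(j) − dT(j). Then H(j,k,l) = T(j,k,l) for all j,k,l ∈ V if and only if DK_j(k,l) + DK_k(l,j) + DK_l(j,k) = (1/6)[g(k,l)dK(j) + g(l,j)dK(k) + g(j,k)dK(l)] for all j,k,l ∈ V. (This is the pointwise algebraic content of the equivalence of Harada's gravitational equation H_{jkl} = T_{jkl} with the Einstein equation modified by a divergence-free conformal Killing tensor K_{jk} = R_{jk} − (R/2)g_{jk} − T_{jk}.) -/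

import Mathlib

open LinearMap (BilinForm)

/-- The trace of a bilinear form `B` with respect to a nondegenerate bilinear form `g`
(contraction of `B` with the inverse of `g`), i.e. the trace of the endomorphism
`g⁻¹ ∘ B`. -/
noncomputable def traceG {V : Type*} [AddCommGroup V] [Module ℝ V] [FiniteDimensional ℝ V]
    (g : BilinForm ℝ V) (hg : g.Nondegenerate) (B : BilinForm ℝ V) : ℝ :=
  LinearMap.trace ℝ V (((LinearMap.BilinForm.toDual g hg).symm : Module.Dual ℝ V →ₗ[ℝ] V) ∘ₗ B)

lemma traceG_aux {V : Type*} [AddCommGroup V] [Module ℝ V] [FiniteDimensional ℝ V]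
    (g : BilinForm ℝ V) (hg : g.Nondegenerate) (B C : BilinForm ℝ V) (c : ℝ) :
    traceG g hg (B - c • g - C) = traceG g hg B - c * Module.finrank ℝ V - traceG g hg C := by
  have hid : (((LinearMap.BilinForm.toDual g hg).symm : Module.Dual ℝ V →ₗ[ℝ] V) ∘ₗ g)
      = LinearMap.id := by
    ext v; exact (LinearMap.BilinForm.toDual g hg).symm_apply_apply v
  simp [traceG, LinearMap.comp_sub, LinearMap.comp_smul, hid, map_sub, map_smul,
    LinearMap.trace_id, smul_eq_mul]

/-- Harada's equation `H_{jkl} = T_{jkl}` is equivalent to the statement that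
`K_{jk} = R_{jk} - (R/2) g_{jk} - T_{jk}` is a (divergence-free) conformal Killing tensor,
i.e. `∇_j K_{kl} + ∇_k K_{lj} + ∇_l K_{jk} = (1/6)(g_{kl} ∇_j K + g_{lj} ∇_k K + g_{jk} ∇_l K)`. -/
theorem harada_eq_iff_conformal_killing
    {V : Type*} [AddCommGroup V] [Module ℝ V] [FiniteDimensional ℝ V]
    (hdim : Module.finrank ℝ V = 4)
    (g : BilinForm ℝ V) (hgsymm : g.IsSymm) (hg : g.Nondegenerate)
    (DR DT : V →ₗ[ℝ] BilinForm ℝ V)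
    (hDRsymm : ∀ j, (DR j).IsSymm) (hDTsymm : ∀ j, (DT j).IsSymm)
    (dR : V → ℝ) (hdR : ∀ j, dR j = traceG g hg (DR j))
    (dT : V → ℝ) (hdT : ∀ j, dT j = traceG g hg (DT j))
    (H T : V → V → V → ℝ)
    (hH : ∀ j k l, H j k l = DR j k l + DR k l j + DR l j k
      - (1/3) * (g k l * dR j + g l j * dR k + g j k * dR l))
    (hT : ∀ j k l, T j k l = DT j k l + DT k l j + DT l j k
      - (1/6) * (g k l * dT j + g l j * dT k + g j k * dT l))
    (DK : V → BilinForm ℝ V)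
    (hDK : ∀ j, DK j = DR j - (dR j / 2) • g - DT j)
    (dK : V → ℝ) (hdK : ∀ j, dK j = traceG g hg (DK j)) :
    (∀ j k l, H j k l = T j k l) ↔
      (∀ j k l, DK j k l + DK k l j + DK l j k
        = (1/6) * (g k l * dK j + g l j * dK k + g j k * dK l)) := by
  have hdKval : ∀ j, dK j = -dR j - dT j := by
    intro j
    rw [hdK, hDK, traceG_aux, hdim, ← hdR, ← hdT]
    ring
  have hDKval : ∀ j k l, DK j k l = DR j k l - (dR j / 2) * g k l - DT j k l := by
    intro j k l
    rw [hDK]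
    simp [smul_eq_mul]
  constructor
  · intro h j k l
    have := h j k l
    rw [hH, hT] at this
    rw [hDKval j k l, hDKval k l j, hDKval l j k, hdKval j, hdKval k, hdKval l,
      show (g l j : ℝ) = g j l from (hgsymm.eq j l).symm,
      show (g k l : ℝ) = g l k from (hgsymm.eq l k).symm,
      show (g j k : ℝ) = g k j from (hgsymm.eq k j).symm] at *
    linarith
  · intro h j k l
    have := h j k l
    rw [hDKval j k l, hDKval k l j, hDKval l j k, hdKval j, hdKval k, hdKval l] at this
    rw [hH, hT]
    rw [show (g l j : ℝ) = g j l from (hgsymm.eq j l).symm,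
      show (g k l : ℝ) = g l k from (hgsymm.eq l k).symm,
      show (g j k : ℝ) = g k j from (hgsymm.eq k j).symm] at *
    linarith
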